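/- For any complex number z and any positive integer n, |d_z(n²)| ≤ d_{(|z|+1)²}(n), where d_w denotes the w-th divisor function. -/

import Mathlib

open Finset

lemma key' (w : ℝ) (hw : 0 ≤ w) : ∀ a : ℕ,
    (∏ j ∈ range (2*a), (w + j)) * (a.factorial : ℝ) ≤
    (∏ j ∈ range a, ((w+1)^2 + j)) * ((2*a).factorial : ℝ) := by
  intro a
  induction a with
  | zero => simp
  | succ a ih =>
    have hP : (0:ℝ) ≤ ∏ j ∈ range (2*a), (w + j) := by
      apply Finset.prod_nonneg; intro j _; positivity
    have hQ : (0:ℝ) ≤ ∏ j ∈ range a, ((w+1)^2 + j) := by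
      apply Finset.prod_nonneg; intro j _; positivity
    have hfa : (0:ℝ) < (a.factorial : ℝ) := by positivity
    have h2 : 2*(a+1) = (2*a) + 1 + 1 := by ring
    rw [h2, Finset.prod_range_succ, Finset.prod_range_succ, Finset.prod_range_succ,
      Nat.factorial_succ, Nat.factorial_succ, Nat.factorial_succ]
    push_cast
    set P := ∏ j ∈ range (2*a), (w + j) with hPdef
    set Q := ∏ j ∈ range a, ((w+1)^2 + j) with hQdef
    have hratio : (w + 2*a) * (w + (2*a+1)) * (a+1) ≤
        ((w+1)^2 + a) * ((2*a+1) * (2*a+1+1)) := by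
      nlinarith [sq_nonneg w, hw, Nat.cast_nonneg (α := ℝ) a,
        mul_nonneg hw (Nat.cast_nonneg (α := ℝ) a),
        mul_nonneg (mul_nonneg hw hw) (Nat.cast_nonneg (α := ℝ) a)]
    have H := mul_le_mul ih hratio (by positivity) (by positivity)
    calc P * (w + 2*↑a) * (w + (2*↑a+1)) * ((↑a + 1) * ↑a.factorial)
        = (P * ↑a.factorial) * ((w + 2*↑a) * (w + (2*↑a+1)) * (↑a + 1)) := by ring
      _ ≤ (Q * ((2*a).factorial : ℝ)) * (((w+1)^2 + ↑a) * ((2*↑a+1) * (2*↑a+1+1))) := H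
      _ = Q * ((w+1)^2 + ↑a) * ((2*↑a+1+1) * ((2*↑a+1) * ↑(2*a).factorial)) := by ring

lemma prime_bound (z : ℂ) (a : ℕ) :
    ‖(∏ j ∈ range (2*a), (z + j)) / (((2*a).factorial : ℕ) : ℂ)‖ ≤
    (∏ j ∈ range a, ((‖z‖+1)^2 + j)) / (a.factorial : ℝ) := by
  rw [norm_div]
  have h1 : ‖(((2*a).factorial : ℕ) : ℂ)‖ = ((2*a).factorial : ℝ) := by simp
  rw [h1]
  have h2 : ‖∏ j ∈ range (2*a), (z + j)‖ ≤ ∏ j ∈ range (2*a), (‖z‖ + j) := by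
    calc ‖∏ j ∈ range (2*a), (z + j)‖ = ∏ j ∈ range (2*a), ‖z + (j:ℂ)‖ := norm_prod _ _
      _ ≤ ∏ j ∈ range (2*a), (‖z‖ + j) := by
        apply Finset.prod_le_prod (fun j _ => norm_nonneg _)
        intro j _
        calc ‖z + (j:ℂ)‖ ≤ ‖z‖ + ‖(j:ℂ)‖ := norm_add_le _ _
          _ = ‖z‖ + j := by simp
  have hf2 : (0:ℝ) < ((2*a).factorial : ℝ) := by positivity
  have hf : (0:ℝ) < (a.factorial : ℝ) := by positivity
  calc ‖∏ j ∈ range (2*a), (z + j)‖ / ((2*a).factorial : ℝ)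
      ≤ (∏ j ∈ range (2*a), (‖z‖ + j)) / ((2*a).factorial : ℝ) := by gcongr
    _ ≤ (∏ j ∈ range a, ((‖z‖+1)^2 + j)) / (a.factorial : ℝ) := by
        rw [div_le_div_iff₀ hf2 hf]
        exact key' ‖z‖ (norm_nonneg z) a

/-- The `z`-th divisor function for complex `z`, multiplicative with
`d_z(p^a) = z(z+1)···(z+a-1)/a!`. -/
noncomputable def dComplex (z : ℂ) (n : ℕ) : ℂ :=
  ∏ p ∈ n.factorization.support,
    (∏ j ∈ Finset.range (n.factorization p), (z + j)) / (Nat.factorial (n.factorization p))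

/-- The `w`-th divisor function for real `w`, multiplicative with
`d_w(p^a) = w(w+1)···(w+a-1)/a!`. -/
noncomputable def dReal (w : ℝ) (n : ℕ) : ℝ :=
  ∏ p ∈ n.factorization.support,
    (∏ j ∈ Finset.range (n.factorization p), (w + j)) / (Nat.factorial (n.factorization p))

theorem stmt_3 (z : ℂ) (n : ℕ) (hn : 0 < n) :
    ‖dComplex z (n ^ 2)‖ ≤ dReal ((‖z‖ + 1) ^ 2) n := by
  have hfac : (n ^ 2).factorization = 2 • n.factorization := by
    rw [Nat.factorization_pow]
  have hsupp : (n ^ 2).factorization.support = n.factorization.support := by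
    rw [hfac]
    exact Finsupp.support_smul_eq two_ne_zero
  have heval : ∀ p, (n ^ 2).factorization p = 2 * n.factorization p := by
    intro p; rw [hfac]; rfl
  rw [dComplex, dReal, hsupp, norm_prod]
  apply Finset.prod_le_prod (fun p _ => norm_nonneg _)
  intro p _
  rw [heval p]
  exact prime_bound z (n.factorization p)
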